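/- Fix t > 0. The map μ ↦ E₁(μ,t) is differentiable on ℝ and its derivative at every μ equals the conditional variance Var₁(μ,t) = M₁(μ,t) − E₁(μ,t)²; in particular this derivative is nonnegative, so μ ↦ E₁(μ,t) is monotone nondecreasing. (Lemma 2 of the paper, case i = 1.) -/

import Mathlib

open MeasureTheory

/-- Standard Gaussian density `φ(x) = (2π)^{-1/2} exp(-x²/2)`. -/
noncomputable def gpdf (x : ℝ) : ℝ := (Real.sqrt (2 * Real.pi))⁻¹ * Real.exp (-x ^ 2 / 2)

/-- Standard Gaussian CDF `Φ(x)`. -/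
noncomputable def gcdf (x : ℝ) : ℝ := ∫ t in Set.Iic x, gpdf t

/-- Normalizing constant `Z₁(μ,t) = 1 - Φ(t-μ) + Φ(-t-μ)`. -/
noncomputable def Z1 (μ t : ℝ) : ℝ := 1 - gcdf (t - μ) + gcdf (-t - μ)

/-- Mean of `N(μ,1)` conditioned on the two-sided tail `(-∞,-t] ∪ [t,∞)`. -/
noncomputable def E1 (μ t : ℝ) : ℝ :=
  (Z1 μ t)⁻¹ * ∫ x in {x : ℝ | t ≤ |x|}, x * gpdf (x - μ)

/-- Second moment of `N(μ,1)` conditioned on the two-sided tail `(-∞,-t] ∪ [t,∞)`. -/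
noncomputable def M1 (μ t : ℝ) : ℝ :=
  (Z1 μ t)⁻¹ * ∫ x in {x : ℝ | t ≤ |x|}, x ^ 2 * gpdf (x - μ)

open Real in
lemma gpdf_cont : Continuous gpdf := by
  unfold gpdf; continuity

lemma gpdf_pos (x : ℝ) : 0 < gpdf x := by
  unfold gpdf
  positivity

lemma integrable_aux (n : ℕ) (c : ℝ) {b : ℝ} (hb : 0 < b) :
    Integrable fun x : ℝ => |x| ^ n * Real.exp (-b * (x - c) ^ 2) := by
  have base : Integrable fun x : ℝ => Real.exp (-(b/2) * (x - c) ^ 2) :=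
    (integrable_exp_neg_mul_sq (half_pos hb)).comp_sub_right c
  refine (base.const_mul ((1 + |c|) ^ n * Real.exp ((n : ℝ) ^ 2 / (2 * b)))).mono'
    (((continuous_abs.pow n).mul (by continuity)).aestronglyMeasurable)
    (Filter.Eventually.of_forall fun x => ?_)
  set y := x - c with hy
  have hxy : |x| ≤ (1 + |c|) * Real.exp |y| := by
    have h1 : |y| + 1 ≤ Real.exp |y| := Real.add_one_le_exp _
    have h2 : |x| ≤ |y| + |c| := by
      calc |x| = |y + c| := by rw [hy]; ring_nf
      _ ≤ |y| + |c| := abs_add_le _ _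
    nlinarith [abs_nonneg y, abs_nonneg c, Real.exp_pos |y|]
  have hpow : |x| ^ n ≤ (1 + |c|) ^ n * Real.exp ((n : ℝ) * |y|) := by
    calc |x| ^ n ≤ ((1 + |c|) * Real.exp |y|) ^ n :=
          pow_le_pow_left₀ (abs_nonneg x) hxy n
    _ = (1 + |c|) ^ n * Real.exp ((n : ℝ) * |y|) := by
        rw [mul_pow, ← Real.exp_nat_mul]
  have hexp : Real.exp ((n : ℝ) * |y|) * Real.exp (-b * y ^ 2)
      ≤ Real.exp ((n : ℝ) ^ 2 / (2 * b)) * Real.exp (-(b/2) * y ^ 2) := by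
    rw [← Real.exp_add, ← Real.exp_add]
    apply Real.exp_le_exp.mpr
    have h3 : 0 ≤ ((n : ℝ) - b * |y|) ^ 2 := sq_nonneg _
    have h4 : |y| ^ 2 = y ^ 2 := sq_abs y
    have hb2 : (0:ℝ) < 2*b := by linarith
    have h5 : (2*b) * ((n:ℝ)^2/(2*b)) = (n:ℝ)^2 := by field_simp
    have h6 : (2*b) * ((n:ℝ)*|y| + -b*y^2) ≤ (2*b) * ((n:ℝ)^2/(2*b) + -(b/2)*y^2) := by
      rw [mul_add, mul_add, h5, ← h4]
      nlinarith [sq_nonneg ((n:ℝ) - b * |y|)]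
    exact le_of_mul_le_mul_left h6 hb2
  have hnorm : ‖|x| ^ n * Real.exp (-b * (x - c) ^ 2)‖
      = |x| ^ n * Real.exp (-b * y ^ 2) := by
    rw [Real.norm_eq_abs, abs_mul, abs_pow, abs_abs, abs_of_pos (Real.exp_pos _), hy]
  rw [hnorm]
  calc |x| ^ n * Real.exp (-b * y ^ 2)
      ≤ ((1 + |c|) ^ n * Real.exp ((n : ℝ) * |y|)) * Real.exp (-b * y ^ 2) := by
        apply mul_le_mul_of_nonneg_right hpow (Real.exp_pos _).le
    _ = (1 + |c|) ^ n * (Real.exp ((n : ℝ) * |y|) * Real.exp (-b * y ^ 2)) := by ring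
    _ ≤ (1 + |c|) ^ n * (Real.exp ((n : ℝ) ^ 2 / (2 * b)) * Real.exp (-(b/2) * y ^ 2)) := by
        apply mul_le_mul_of_nonneg_left hexp (by positivity)
    _ = (1 + |c|) ^ n * Real.exp ((n : ℝ) ^ 2 / (2 * b)) * Real.exp (-(b/2) * (x - c) ^ 2) := by
        rw [hy]; ring

lemma integrable_abs_pow_gpdf (n : ℕ) (μ : ℝ) :
    Integrable fun x : ℝ => |x| ^ n * gpdf (x - μ) := by
  have h : (fun x : ℝ => |x| ^ n * gpdf (x - μ))
      = fun x : ℝ => (Real.sqrt (2 * Real.pi))⁻¹ * (|x| ^ n * Real.exp (-(1/2) * (x - μ) ^ 2)) := by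
    funext x
    unfold gpdf
    rw [show -(x - μ) ^ 2 / 2 = -(1/2) * (x - μ) ^ 2 by ring]
    ring
  rw [h]
  exact (integrable_aux n μ (by norm_num)).const_mul _

lemma integrable_xpow_gpdf (n : ℕ) (μ : ℝ) :
    Integrable fun x : ℝ => x ^ n * gpdf (x - μ) := by
  refine (integrable_abs_pow_gpdf n μ).mono'
    (((continuous_pow n).mul (gpdf_cont.comp (by continuity))).aestronglyMeasurable)
    (Filter.Eventually.of_forall fun x => ?_)
  rw [Real.norm_eq_abs, abs_mul, abs_pow, abs_of_pos (gpdf_pos _)]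

lemma hasDerivAt_gpdf_shift (a m : ℝ) :
    HasDerivAt (fun m : ℝ => gpdf (a - m)) ((a - m) * gpdf (a - m)) m := by
  have h1 : HasDerivAt (fun m : ℝ => a - m) (-1) m := by
    exact (hasDerivAt_id' m).const_sub a
  have h2 : HasDerivAt (fun m : ℝ => -(a - m) ^ 2 / 2) (a - m) m := by
    have := ((h1.pow 2).neg).div_const 2
    refine this.congr_deriv ?_
    ring
  have h3 := h2.exp.const_mul ((Real.sqrt (2 * Real.pi))⁻¹)
  have h4 : (fun m : ℝ => (Real.sqrt (2 * Real.pi))⁻¹ * Real.exp (-(a - m) ^ 2 / 2))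
      = fun m : ℝ => gpdf (a - m) := by funext m; rfl
  rw [h4] at h3
  refine h3.congr_deriv ?_
  unfold gpdf
  ring

lemma measurableSet_tail (t : ℝ) : MeasurableSet {x : ℝ | t ≤ |x|} :=
  (isClosed_le continuous_const continuous_abs).measurableSet

lemma hasDerivAt_N (n : ℕ) (t μ : ℝ) :
    HasDerivAt (fun m : ℝ => ∫ x in {x : ℝ | t ≤ |x|}, x ^ n * gpdf (x - m))
      ((∫ x in {x : ℝ | t ≤ |x|}, x ^ (n+1) * gpdf (x - μ))
        - μ * ∫ x in {x : ℝ | t ≤ |x|}, x ^ n * gpdf (x - μ)) μ := by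
  set S := {x : ℝ | t ≤ |x|}
  set K := (Real.sqrt (2 * Real.pi))⁻¹ * Real.exp (1/2) with hK
  have hKpos : 0 < K := by rw [hK]; positivity
  have main := hasDerivAt_integral_of_dominated_loc_of_deriv_le
    (F := fun (m : ℝ) (x : ℝ) => x ^ n * gpdf (x - m))
    (F' := fun (m : ℝ) (x : ℝ) => x ^ n * ((x - m) * gpdf (x - m)))
    (x₀ := μ) (s := Metric.ball μ 1) (μ := volume.restrict S)
    (bound := fun x => |x| ^ n * ((|x| + (|μ| + 1)) * (K * Real.exp (-(1/4) * (x - μ) ^ 2))))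
    (Metric.ball_mem_nhds μ one_pos)
    (Filter.Eventually.of_forall fun m =>
      (((continuous_pow n).mul (gpdf_cont.comp (by continuity))).aestronglyMeasurable))
    ((integrable_xpow_gpdf n μ).restrict)
    ((((continuous_pow n).mul ((by continuity : Continuous fun x : ℝ => x - μ).mul
        (gpdf_cont.comp (by continuity)))).aestronglyMeasurable))
    (Filter.Eventually.of_forall fun a => fun m hm => ?_)
    ?_
    (Filter.Eventually.of_forall fun a => fun m hm =>
      (hasDerivAt_gpdf_shift a m).const_mul (a ^ n))
  · -- conclude
    have h2 := main.2
    have hrw : (∫ x in S, x ^ n * ((x - μ) * gpdf (x - μ)))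
        = (∫ x in S, x ^ (n+1) * gpdf (x - μ)) - μ * ∫ x in S, x ^ n * gpdf (x - μ) := by
      have hint1 : IntegrableOn (fun x : ℝ => x ^ (n+1) * gpdf (x - μ)) S :=
        (integrable_xpow_gpdf (n+1) μ).integrableOn
      have hint2 : IntegrableOn (fun x : ℝ => μ * (x ^ n * gpdf (x - μ))) S :=
        ((integrable_xpow_gpdf n μ).const_mul μ).integrableOn
      have : (fun x : ℝ => x ^ n * ((x - μ) * gpdf (x - μ)))
          = fun x : ℝ => x ^ (n+1) * gpdf (x - μ) - μ * (x ^ n * gpdf (x - μ)) := by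
        funext x; ring
      rw [this, integral_sub hint1 hint2, integral_const_mul]
    rw [← hrw]
    exact h2
  · -- bound
    have hgd : gpdf (a - m) ≤ K * Real.exp (-(1/4) * (a - μ) ^ 2) := by
      unfold gpdf
      rw [hK, mul_assoc, ← Real.exp_add]
      apply mul_le_mul_of_nonneg_left _ (by positivity)
      apply Real.exp_le_exp.mpr
      have hdist : |m - μ| < 1 := by
        have := Metric.mem_ball.mp hm
        rwa [Real.dist_eq] at this
      have h1 : (m - μ) ^ 2 < 1 := by
        have := abs_nonneg (m - μ)
        nlinarith [sq_abs (m - μ)]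
      nlinarith [sq_nonneg ((a - m) - (m - μ))]
    have habs : |a - m| ≤ |a| + (|μ| + 1) := by
      have hdist : |m - μ| < 1 := by
        have := Metric.mem_ball.mp hm
        rwa [Real.dist_eq] at this
      calc |a - m| ≤ |a| + |m| := abs_sub _ _
        _ ≤ |a| + (|μ| + 1) := by
            have : |m| ≤ |μ| + |m - μ| := by
              calc |m| = |μ + (m - μ)| := by ring_nf
              _ ≤ |μ| + |m - μ| := abs_add_le _ _
            linarith
    rw [Real.norm_eq_abs, abs_mul, abs_pow, abs_mul, abs_of_pos (gpdf_pos _)]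
    apply mul_le_mul_of_nonneg_left _ (by positivity)
    exact mul_le_mul habs hgd (gpdf_pos _).le (by positivity)
  · -- bound integrable
    have heq : (fun x : ℝ => |x| ^ n * ((|x| + (|μ| + 1)) * (K * Real.exp (-(1/4) * (x - μ) ^ 2))))
        = fun x : ℝ => K * (|x| ^ (n+1) * Real.exp (-(1/4) * (x - μ) ^ 2))
            + (K * (|μ| + 1)) * (|x| ^ n * Real.exp (-(1/4) * (x - μ) ^ 2)) := by
      funext x; rw [pow_succ]; ring
    rw [heq]
    exact (((integrable_aux (n+1) μ (by norm_num)).const_mul K).add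
      ((integrable_aux n μ (by norm_num)).const_mul _)).restrict

lemma gpdf_total : ∫ x : ℝ, gpdf x = 1 := by
  unfold gpdf
  rw [integral_const_mul]
  have h : (fun x : ℝ => Real.exp (-x ^ 2 / 2)) = fun x : ℝ => Real.exp (-(1/2) * x ^ 2) := by
    funext x; rw [show -x ^ 2 / 2 = -(1/2) * x ^ 2 by ring]
  rw [h, integral_gaussian]
  rw [show Real.pi / (1/2) = 2 * Real.pi by ring]
  rw [inv_mul_cancel₀]
  positivity

lemma gcdf_shift (a μ : ℝ) : ∫ x in Set.Iic a, gpdf (x - μ) = gcdf (a - μ) := by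
  unfold gcdf
  rw [← integral_indicator measurableSet_Iic, ← integral_indicator measurableSet_Iic]
  rw [← integral_sub_right_eq_self (fun y => (Set.Iic (a - μ)).indicator gpdf y) μ]
  congr 1
  funext x
  by_cases hx : x ≤ a
  · rw [Set.indicator_of_mem (Set.mem_Iic.mpr hx),
      Set.indicator_of_mem (Set.mem_Iic.mpr (by linarith : x - μ ≤ a - μ))]
  · rw [Set.indicator_of_notMem (by simpa using hx),
      Set.indicator_of_notMem (by simp only [Set.mem_Iic]; intro h; exact hx (by linarith))]

lemma Z1_eq (t μ : ℝ) (ht : 0 < t) :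
    Z1 μ t = ∫ x in {x : ℝ | t ≤ |x|}, gpdf (x - μ) := by
  have hint : Integrable fun x : ℝ => gpdf (x - μ) := by
    simpa using integrable_abs_pow_gpdf 0 μ
  have hset : {x : ℝ | t ≤ |x|} = Set.Iic (-t) ∪ Set.Ici t := by
    ext x
    simp only [Set.mem_setOf_eq, Set.mem_union, Set.mem_Iic, Set.mem_Ici, le_abs, le_neg]
    tauto
  rw [hset, setIntegral_union (Set.Iic_disjoint_Ici.mpr (not_le.mpr (by linarith))) measurableSet_Ici
    hint.integrableOn hint.integrableOn]
  have h1 : ∫ x in Set.Iic (-t), gpdf (x - μ) = gcdf (-t - μ) := gcdf_shift _ _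
  have h2 : ∫ x in Set.Ici t, gpdf (x - μ) = 1 - gcdf (t - μ) := by
    have hiic := gcdf_shift t μ
    have htot : (∫ x in Set.Iic t, gpdf (x - μ)) + ∫ x in Set.Ioi t, gpdf (x - μ)
        = ∫ x : ℝ, gpdf (x - μ) :=
      intervalIntegral.integral_Iic_add_Ioi hint.integrableOn hint.integrableOn
    have hall : ∫ x : ℝ, gpdf (x - μ) = 1 := by
      rw [integral_sub_right_eq_self gpdf μ]; exact gpdf_total
    rw [integral_Ici_eq_integral_Ioi]
    rw [hall] at htot
    linarith
  rw [h1, h2]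
  unfold Z1
  ring

lemma Z1_pos (t μ : ℝ) (ht : 0 < t) : 0 < Z1 μ t := by
  rw [Z1_eq t μ ht]
  have hint : Integrable fun x : ℝ => gpdf (x - μ) := by
    simpa using integrable_abs_pow_gpdf 0 μ
  rw [setIntegral_pos_iff_support_of_nonneg_ae
    (Filter.Eventually.of_forall fun x => (gpdf_pos _).le) hint.integrableOn]
  have hsupp : Function.support (fun x : ℝ => gpdf (x - μ)) = Set.univ := by
    ext x; simp [Function.mem_support, (gpdf_pos (x - μ)).ne']
  rw [hsupp, Set.univ_inter]
  have hsub : Set.Ici t ⊆ {x : ℝ | t ≤ |x|} := fun x hx => le_trans hx (le_abs_self x)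
  calc (0 : ENNReal) < volume (Set.Ici t) := by rw [Real.volume_Ici]; exact ENNReal.zero_lt_top
    _ ≤ volume {x : ℝ | t ≤ |x|} := measure_mono hsub


/-- Lemma 2 of the paper (case i = 1): for fixed `t > 0`, the truncated Gaussian mean
`μ ↦ E₁(μ,t)` is differentiable with derivative the conditional variance
`Var₁(μ,t) = M₁(μ,t) - E₁(μ,t)²`, which is nonnegative; hence `μ ↦ E₁(μ,t)` is
monotone nondecreasing. -/
theorem truncGaussTail_mean_hasDerivAt_variance (t : ℝ) (ht : 0 < t) :
    (∀ μ : ℝ, HasDerivAt (fun m : ℝ => E1 m t) (M1 μ t - (E1 μ t) ^ 2) μ) ∧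
    (∀ μ : ℝ, 0 ≤ M1 μ t - (E1 μ t) ^ 2) ∧
    Monotone (fun μ : ℝ => E1 μ t) := by
  set S := {x : ℝ | t ≤ |x|} with hS
  set N : ℕ → ℝ → ℝ := fun n m => ∫ x in S, x ^ n * gpdf (x - m) with hN
  have hZ : ∀ m, Z1 m t = N 0 m := by
    intro m
    rw [Z1_eq t m ht, hN]
    simp only [pow_zero, one_mul]
    rfl
  have hZpos : ∀ m, 0 < N 0 m := fun m => (hZ m) ▸ Z1_pos t m ht
  have hE : ∀ m, E1 m t = (N 0 m)⁻¹ * N 1 m := by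
    intro m
    rw [E1, hZ m, hN]
    simp only [pow_one]
    rfl
  have hM : ∀ m, M1 m t = (N 0 m)⁻¹ * N 2 m := by
    intro m
    rw [M1, hZ m]
  have hD : ∀ (n : ℕ) (μ : ℝ), HasDerivAt (N n) (N (n+1) μ - μ * N n μ) μ :=
    fun n μ => hasDerivAt_N n t μ
  have key : ∀ μ : ℝ, HasDerivAt (fun m : ℝ => E1 m t) (M1 μ t - (E1 μ t) ^ 2) μ := by
    intro μ
    have hne : N 0 μ ≠ 0 := (hZpos μ).ne'
    have h := ((hD 0 μ).inv hne).mul (hD 1 μ)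
    have hfun : ((N 0)⁻¹ * N 1) = fun m : ℝ => E1 m t := by
      funext m; simp only [Pi.mul_apply, Pi.inv_apply, hE m]
    rw [hfun] at h
    refine h.congr_deriv ?_
    rw [hM μ, hE μ]
    simp only [Pi.inv_apply, zero_add, Nat.reduceAdd]
    field_simp
    ring
  have nonneg : ∀ μ : ℝ, 0 ≤ M1 μ t - (E1 μ t) ^ 2 := by
    intro μ
    set l := (N 0 μ)⁻¹ * N 1 μ with hl
    have hSm : MeasurableSet S := measurableSet_tail t
    have hI : (0:ℝ) ≤ ∫ x in S, (x - l) ^ 2 * gpdf (x - μ) :=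
      setIntegral_nonneg hSm fun x _ => mul_nonneg (sq_nonneg _) (gpdf_pos _).le
    have hexp : (∫ x in S, (x - l) ^ 2 * gpdf (x - μ))
        = N 2 μ - (2 * l) * N 1 μ + l ^ 2 * N 0 μ := by
      have e1 : (fun x : ℝ => (x - l) ^ 2 * gpdf (x - μ))
          = fun x : ℝ => (x ^ 2 * gpdf (x - μ) - (2 * l) * (x ^ 1 * gpdf (x - μ)))
              + l ^ 2 * (x ^ 0 * gpdf (x - μ)) := by
        funext x; ring
      have hia : Integrable (fun x : ℝ => x ^ 2 * gpdf (x - μ)) (volume.restrict S) :=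
        (integrable_xpow_gpdf 2 μ).restrict
      have hib : Integrable (fun x : ℝ => (2 * l) * (x ^ 1 * gpdf (x - μ)))
          (volume.restrict S) := ((integrable_xpow_gpdf 1 μ).restrict).const_mul _
      have hic : Integrable (fun x : ℝ => l ^ 2 * (x ^ 0 * gpdf (x - μ)))
          (volume.restrict S) := ((integrable_xpow_gpdf 0 μ).restrict).const_mul _
      have hiab : Integrable
          (fun x : ℝ => x ^ 2 * gpdf (x - μ) - 2 * l * (x ^ 1 * gpdf (x - μ)))
          (volume.restrict S) := hia.sub hib
      rw [e1, integral_add hiab hic, integral_sub hia hib,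
        integral_const_mul, integral_const_mul]
    have hne : N 0 μ ≠ 0 := (hZpos μ).ne'
    have hval : M1 μ t - (E1 μ t) ^ 2
        = (N 0 μ)⁻¹ * (N 2 μ - (2 * l) * N 1 μ + l ^ 2 * N 0 μ) := by
      rw [hM μ, hE μ, hl]
      field_simp
      ring
    rw [hval, ← hexp]
    exact mul_nonneg (inv_nonneg.mpr (hZpos μ).le) hI
  refine ⟨key, nonneg, ?_⟩
  exact monotone_of_deriv_nonneg (fun μ => (key μ).differentiableAt)
    (fun μ => by rw [(key μ).deriv]; exact nonneg μ)
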